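/- Let S = (A, φ, W) be an eventually injective DF0L system that is weakly circular with threshold D_w. Then S is strongly circular with strong circularity threshold D_s ≤ D_w + δ_S + 1, where δ_S = max{|φ(u)| : u ≠ v ∈ L(S), φ(u) = φ(v)}. -/

import Mathlib

/-- The morphism on words induced by a map on letters. -/
def applyM {A B : Type*} (f : A → List B) (w : List A) : List B := (w.map f).flatten

/-- `wpow u n` is the word `u` repeated `n` times. -/
def wpow {A : Type*} (u : List A) (n : ℕ) : List A := (List.replicate n u).flatten

/-- A word is primitive if it is nonempty and not a proper power. -/
def Primitive {A : Type*} (w : List A) : Prop := w ≠ [] ∧ ∀ u n, w = wpow u n → n = 1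

/-- Conjugacy of words. -/
def Conj {A : Type*} (u v : List A) : Prop := ∃ x y, u = x ++ y ∧ v = y ++ x

/-- The language of a D(F)0L system with (iterated) morphism `g` and axiom set `W`:
all factors of all `g^[n] w`, `w ∈ W`. -/
def LangG {A : Type*} (g : List A → List A) (W : Set (List A)) : Set (List A) :=
  {u | ∃ n : ℕ, ∃ w ∈ W, u <:+: g^[n] w}

/-- `(s, w, t)` is an interpretation of `u`: `w` is in the language and `g w = s ++ u ++ t`. -/
def Interp {A : Type*} (g : List A → List A) (L : Set (List A)) (s w t u : List A) : Prop :=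
  w ∈ L ∧ g w = s ++ u ++ t

/-- The pair `(u₁, u₂)` is compatible with the interpretation `(s, w, t)` of `u₁ ++ u₂`. -/
def Compatible {A : Type*} (g : List A → List A) (s w t u₁ u₂ : List A) : Prop :=
  ∃ w₁ w₂, w = w₁ ++ w₂ ∧ g w₁ = s ++ u₁ ∧ g w₂ = u₂ ++ t

/-- Weakly synchronizing pair: compatible with all interpretations of `u₁ ++ u₂`. -/
def WeakSync {A : Type*} (g : List A → List A) (L : Set (List A)) (u₁ u₂ : List A) : Prop :=
  ∀ s w t, Interp g L s w t (u₁ ++ u₂) → Compatible g s w t u₁ u₂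

/-- Strongly synchronizing pair. -/
def StrongSync {A : Type*} (g : List A → List A) (L : Set (List A)) (u₁ u₂ : List A) : Prop :=
  u₁ ≠ [] ∧ ∃ a : A, ∀ s w t, Interp g L s w t (u₁ ++ u₂) →
    ∃ w₁ w₂, w = w₁ ++ w₂ ∧ g w₁ = s ++ u₁ ∧ g w₂ = u₂ ++ t ∧ w₁.getLast? = some a

/-- A word is weakly synchronized if some factorization of it is weakly synchronizing. -/
def WeaklySynchronized {A : Type*} (g : List A → List A) (L : Set (List A)) (u : List A) : Prop :=
  ∃ u₁ u₂, u = u₁ ++ u₂ ∧ WeakSync g L u₁ u₂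

/-- An admissible pair: compatible with at least one interpretation. -/
def Admissible {A : Type*} (g : List A → List A) (L : Set (List A)) (u₁ u₂ : List A) : Prop :=
  ∃ s w t, Interp g L s w t (u₁ ++ u₂) ∧ Compatible g s w t u₁ u₂

/-- A word is bounded if the lengths of its iterated images stay bounded. -/
def BoundedWord {A : Type*} (f : A → List A) (w : List A) : Prop :=
  ∃ C, ∀ k : ℕ, ((applyM f)^[k] w).length ≤ C

/-- `Ω(S)`: primitive words all of whose powers belong to the language. -/
def Omega {A : Type*} (f : A → List A) (W : Set (List A)) : Set (List A) :=
  {v | v ∈ LangG (applyM f) W ∧ Primitive v ∧ ∀ k : ℕ, wpow v k ∈ LangG (applyM f) W}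

/-- Minimal interpretation: `|s| < |f(first letter of w)|` and `|t| < |f(last letter of w)|`. -/
def MinInterp {A : Type*} (f : A → List A) (L : Set (List A)) (s w t u : List A) : Prop :=
  Interp (applyM f) L s w t u ∧ w ≠ [] ∧
    (∀ a, w.head? = some a → s.length < (f a).length) ∧
    (∀ b, w.getLast? = some b → t.length < (f b).length)

lemma applyM_append' {A B : Type*} (f : A → List B) (u v : List A) :
    applyM f (u ++ v) = applyM f u ++ applyM f v := by
  simp [applyM]

lemma applyM_infix' {A B : Type*} (f : A → List B) {u v : List A} (h : u <:+: v) :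
    applyM f u <:+: applyM f v := by
  obtain ⟨s, t, rfl⟩ := h
  exact ⟨applyM f s, applyM f t, by simp [applyM_append']⟩

lemma langG_infix' {A : Type*} (f : A → List A) (W : Set (List A)) {u v : List A}
    (h : u <:+: v) (hv : v ∈ LangG (applyM f) W) : u ∈ LangG (applyM f) W := by
  obtain ⟨n, w, hw, hvw⟩ := hv
  exact ⟨n, w, hw, h.trans hvw⟩

lemma langG_apply' {A : Type*} (f : A → List A) (W : Set (List A)) {v : List A}
    (hv : v ∈ LangG (applyM f) W) : applyM f v ∈ LangG (applyM f) W := by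
  obtain ⟨n, w, hw, hvw⟩ := hv
  exact ⟨n + 1, w, hw, by rw [Function.iterate_succ_apply']; exact applyM_infix' f hvw⟩

theorem stmt10 {A : Type*} (f : A → List A)
    (W : Set (List A)) (hWfin : W.Finite) (hWne : W.Nonempty)
    (hax : ∀ w ∈ W, w ≠ [])
    (Dw δ : ℕ)
    (hδ : ∀ u v : List A, u ∈ LangG (applyM f) W → v ∈ LangG (applyM f) W →
      u ≠ v → applyM f u = applyM f v → (applyM f u).length ≤ δ)
    (hweak : ∀ u ∈ LangG (applyM f) W, Dw < u.length →
      WeaklySynchronized (applyM f) (LangG (applyM f) W) u) :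
    ∀ u₁ u₂ : List A,
      Admissible (applyM f) (LangG (applyM f) W) u₁ u₂ →
      Dw + δ + 1 < u₁.length → Dw + δ + 1 < u₂.length →
      StrongSync (applyM f) (LangG (applyM f) W) u₁ u₂ := by
  intro u₁ u₂ hadm h1 h2
  obtain ⟨s₀, w₀, t₀, ⟨hw₀L, hgw₀⟩, p₁, p₂, hw₀split, hgp₁, hgp₂⟩ := hadm
  -- decompose u₁ = u₁' ++ z with |z| = δ+1
  obtain ⟨u₁', z, hu₁, hzlen, hu₁'len⟩ :
      ∃ p q, u₁ = p ++ q ∧ q.length = δ + 1 ∧ Dw < p.length := by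
    refine ⟨u₁.take (u₁.length - (δ + 1)), u₁.drop (u₁.length - (δ + 1)),
      (List.take_append_drop _ _).symm, ?_, ?_⟩
    · rw [List.length_drop]; omega
    · rw [List.length_take]; omega
  -- decompose u₂ = z' ++ u₂' with |z'| = δ+1
  obtain ⟨z', u₂', hu₂, hz'len, hu₂'len⟩ :
      ∃ p q, u₂ = p ++ q ∧ p.length = δ + 1 ∧ Dw < q.length := by
    refine ⟨u₂.take (δ + 1), u₂.drop (δ + 1), (List.take_append_drop _ _).symm, ?_, ?_⟩
    · rw [List.length_take]; omega
    · rw [List.length_drop]; omega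
  -- memberships
  have hu12L : u₁ ++ u₂ ∈ LangG (applyM f) W :=
    langG_infix' f W ⟨s₀, t₀, hgw₀.symm⟩ (langG_apply' f W hw₀L)
  have hu₁'L : u₁' ∈ LangG (applyM f) W := by
    refine langG_infix' f W ?_ hu12L
    exact (((List.prefix_append u₁' z).trans (hu₁ ▸ List.prefix_rfl)).trans
      (List.prefix_append u₁ u₂)).isInfix
  have hu₂'L : u₂' ∈ LangG (applyM f) W := by
    refine langG_infix' f W ?_ hu12L
    exact (((List.suffix_append z' u₂').trans (hu₂ ▸ List.suffix_rfl)).trans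
      (List.suffix_append u₁ u₂)).isInfix
  obtain ⟨x₁, x₂, hx, hwsx⟩ := hweak u₁' hu₁'L hu₁'len
  obtain ⟨y₁, y₂, hy, hwsy⟩ := hweak u₂' hu₂'L hu₂'len
  have hxlen : x₁.length + x₂.length = u₁'.length := by
    have := congrArg List.length hx; simpa using this.symm
  have hylen : y₁.length + y₂.length = u₂'.length := by
    have := congrArg List.length hy; simpa using this.symm
  have hu₁len : u₁.length = u₁'.length + z.length := by
    have := congrArg List.length hu₁; simpa using this
  have hu₂len : u₂.length = z'.length + u₂'.length := by
    have := congrArg List.length hu₂; simpa using this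
  -- key: every interpretation splits as α ++ m ++ ζ with fixed images
  have key : ∀ s w t, Interp (applyM f) (LangG (applyM f) W) s w t (u₁ ++ u₂) →
      ∃ α m ζ, w = α ++ m ++ ζ ∧ applyM f α = s ++ x₁ ∧
        applyM f m = x₂ ++ z ++ z' ++ y₁ ∧ applyM f ζ = y₂ ++ t := by
    rintro s w t ⟨hwL, hgw⟩
    have hgw1 : applyM f w = s ++ (x₁ ++ x₂) ++ (z ++ (z' ++ ((y₁ ++ y₂) ++ t))) := by
      rw [hgw, hu₁, hu₂, hx, hy]; simp [List.append_assoc]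
    obtain ⟨α, β, hαβ, hgα, hgβ⟩ := hwsx s w _ ⟨hwL, hgw1⟩
    have hgw2 : applyM f w = (s ++ x₁ ++ x₂ ++ z ++ z') ++ (y₁ ++ y₂) ++ t := by
      rw [hgw, hu₁, hu₂, hx, hy]; simp [List.append_assoc]
    obtain ⟨γ, ζ, hγζ, hgγ, hgζ⟩ := hwsy _ w t ⟨hwL, hgw2⟩
    have hαγ : α <+: γ := by
      rcases List.prefix_or_prefix_of_prefix ⟨β, hαβ.symm⟩ ⟨ζ, hγζ.symm⟩ with h | h
      · exact h
      · exfalso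
        obtain ⟨e, he⟩ := h
        have hl : applyM f γ ++ applyM f e = applyM f α := by
          rw [← applyM_append', he]
        have := congrArg List.length hl
        rw [hgα, hgγ] at this
        simp only [List.length_append] at this
        omega
    obtain ⟨m, hm⟩ := hαγ
    have hgm : applyM f m = x₂ ++ z ++ z' ++ y₁ := by
      have hl : applyM f α ++ applyM f m = applyM f γ := by
        rw [← applyM_append', hm]
      rw [hgα, hgγ] at hl
      have : s ++ (x₁ ++ applyM f m) = s ++ (x₁ ++ (x₂ ++ (z ++ (z' ++ y₁)))) := by
        simpa [List.append_assoc] using hl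
      have := List.append_cancel_left (List.append_cancel_left this)
      simp [this, List.append_assoc]
    exact ⟨α, m, ζ, by rw [hγζ, ← hm, List.append_assoc], hgα, hgm, hgζ⟩
  -- apply key to the admissible interpretation
  obtain ⟨α₀, m₀, ζ₀, hw₀eq, hgα₀, hgm₀, hgζ₀⟩ := key s₀ w₀ t₀ ⟨hw₀L, hgw₀⟩
  -- α₀ <+: p₁
  have hα₀p₁ : α₀ <+: p₁ := by
    rcases List.prefix_or_prefix_of_prefix
        (⟨m₀ ++ ζ₀, by rw [hw₀eq]; simp [List.append_assoc]⟩ : α₀ <+: w₀)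
        (⟨p₂, hw₀split.symm⟩ : p₁ <+: w₀) with h | h
    · exact h
    · obtain ⟨e, he⟩ := h
      have hl : applyM f p₁ ++ applyM f e = applyM f α₀ := by
        rw [← applyM_append', he]
      have := congrArg List.length hl
      rw [hgα₀, hgp₁] at this
      simp only [List.length_append] at this
      have : α₀ = p₁ ++ e := he.symm
      -- lengths give e's image empty and |u₁| ≤ |x₁|, contradiction
      omega
  obtain ⟨d, hd⟩ := hα₀p₁
  have hgd : applyM f d = x₂ ++ z := by
    have hl : applyM f α₀ ++ applyM f d = applyM f p₁ := by
      rw [← applyM_append', hd]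
    rw [hgα₀, hgp₁, hu₁, hx] at hl
    have : s₀ ++ (x₁ ++ applyM f d) = s₀ ++ (x₁ ++ (x₂ ++ z)) := by
      simpa [List.append_assoc] using hl
    have := List.append_cancel_left (List.append_cancel_left this)
    simp [this]
  -- p₁ <+: α₀ ++ m₀
  have hp₁γ₀ : p₁ <+: α₀ ++ m₀ := by
    rcases List.prefix_or_prefix_of_prefix
        (⟨p₂, hw₀split.symm⟩ : p₁ <+: w₀)
        (⟨ζ₀, by rw [hw₀eq]⟩ : α₀ ++ m₀ <+: w₀) with h | h
    · exact h
    · obtain ⟨e, he⟩ := h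
      have hl : applyM f (α₀ ++ m₀) ++ applyM f e = applyM f p₁ := by
        rw [← applyM_append', he]
      rw [applyM_append', hgα₀, hgm₀, hgp₁] at hl
      have := congrArg List.length hl
      simp only [List.length_append] at this
      omega
  obtain ⟨d', hd'⟩ := hp₁γ₀
  have hm₀dd' : m₀ = d ++ d' := by
    have : α₀ ++ (d ++ d') = α₀ ++ m₀ := by
      rw [← List.append_assoc, hd, hd']
    exact (List.append_cancel_left this).symm
  have hgd' : applyM f d' = z' ++ y₁ := by
    have hl : applyM f d ++ applyM f d' = applyM f m₀ := by
      rw [← applyM_append', hm₀dd']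
    rw [hgd, hgm₀] at hl
    have : x₂ ++ (z ++ applyM f d') = x₂ ++ (z ++ (z' ++ y₁)) := by
      simpa [List.append_assoc] using hl
    have := List.append_cancel_left (List.append_cancel_left this)
    simp [this]
  have hdne : d ≠ [] := by
    intro h
    have : applyM f d = [] := by rw [h]; rfl
    rw [hgd] at this
    have := congrArg List.length this
    simp only [List.length_append, List.length_nil] at this
    omega
  have hm₀L : m₀ ∈ LangG (applyM f) W :=
    langG_infix' f W ⟨α₀, ζ₀, by rw [hw₀eq]⟩ hw₀L
  refine ⟨by intro h; rw [h] at h1; simp at h1, d.getLast hdne, ?_⟩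
  rintro s w t hint
  obtain ⟨α, m, ζ, hweq, hgα, hgm, hgζ⟩ := key s w t hint
  have hmL : m ∈ LangG (applyM f) W :=
    langG_infix' f W ⟨α, ζ, by rw [hweq]⟩ hint.1
  have hmeq : m = m₀ := by
    by_contra hne
    have := hδ m m₀ hmL hm₀L hne (by rw [hgm, hgm₀])
    rw [hgm] at this
    simp only [List.length_append] at this
    omega
  refine ⟨α ++ d, d' ++ ζ, ?_, ?_, ?_, ?_⟩
  · rw [hweq, hmeq, hm₀dd']; simp [List.append_assoc]
  · rw [applyM_append', hgα, hgd, hu₁, hx]; simp [List.append_assoc]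
  · rw [applyM_append', hgd', hgζ, hu₂, hy]; simp [List.append_assoc]
  · rw [List.getLast?_append_of_ne_nil _ hdne, List.getLast?_eq_getLast hdne]
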